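/- Let a > 0, b > 0, and c* > 0. Let u : ℝ^N × [0,∞) → ℝ be continuous, nonnegative, and bounded (sup_{x,t} u(x,t) < ∞), and define v(x,t) = ∫₀^∞ e^{−s} ∫_{ℝ^N} G(x−y, s) u(y,t) dy ds. If for every c with 0 ≤ c < c* one has lim_{t→∞} sup_{|x| ≤ ct} |u(x,t) − a/b| = 0, then for every c with 0 ≤ c < c* one also has lim_{t→∞} sup_{|x| ≤ ct} |v(x,t) − a/b| = 0. -/

import Mathlib

open MeasureTheory Real Set Filter
open scoped ENNReal

noncomputable section

/-- Euclidean space `ℝ^N`. -/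
abbrev Spc (N : ℕ) := EuclideanSpace ℝ (Fin N)

/-- Partial derivative of `f` in the `i`-th coordinate direction. -/
noncomputable def pdir {N : ℕ} (f : Spc N → ℝ) (i : Fin N) (x : Spc N) : ℝ :=
  fderiv ℝ f x (EuclideanSpace.single i 1)

/-- Laplacian `Δf = ∑ i ∂²f/∂xᵢ²`. -/
noncomputable def lapl {N : ℕ} (f : Spc N → ℝ) (x : Spc N) : ℝ :=
  ∑ i, pdir (pdir f i) i x

/-- The chemotaxis term `∇·(u ∇v) = ∑ i ∂ᵢ (u ∂ᵢ v)`. -/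
noncomputable def divg {N : ℕ} (u v : Spc N → ℝ) (x : Spc N) : ℝ :=
  ∑ i, pdir (fun y => u y * pdir v i y) i x

/-- Membership in `C_unif^b(ℝ^N)`: bounded and uniformly continuous. -/
def CunifB {N : ℕ} (f : Spc N → ℝ) : Prop :=
  UniformContinuous f ∧ ∃ M, ∀ x, |f x| ≤ M

/-- `t ∈ [0, T)` for an extended-real final time `T`. -/
def InT (t : ℝ) (T : ℝ≥0∞) : Prop := 0 ≤ t ∧ ENNReal.ofReal t < T

/-- Classical solution of (KS) on `ℝ^N × [0,T)`:  `u, v` continuous on `ℝ^N × [0,T)`,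
twice continuously differentiable in `x` and once differentiable in `t` on `ℝ^N × (0,T)`,
satisfying `u_t = Δu - χ ∇·(u∇v) + u(a - bu)` and `0 = Δv + u - v` pointwise there,
with `v(·,t)` bounded for each `t`. -/
structure IsClassicalKS (N : ℕ) (χ a b : ℝ) (T : ℝ≥0∞)
    (u v : Spc N → ℝ → ℝ) : Prop where
  contu : ContinuousOn (fun q : Spc N × ℝ => u q.1 q.2) {q | InT q.2 T}
  contv : ContinuousOn (fun q : Spc N × ℝ => v q.1 q.2) {q | InT q.2 T}
  cdu : ∀ t : ℝ, 0 < t → ENNReal.ofReal t < T → ContDiff ℝ 2 fun x => u x t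
  cdv : ∀ t : ℝ, 0 < t → ENNReal.ofReal t < T → ContDiff ℝ 2 fun x => v x t
  difft : ∀ x, ∀ t : ℝ, 0 < t → ENNReal.ofReal t < T → DifferentiableAt ℝ (u x) t
  equ : ∀ x, ∀ t : ℝ, 0 < t → ENNReal.ofReal t < T →
    deriv (u x) t =
      lapl (fun y => u y t) x - χ * divg (fun y => u y t) (fun y => v y t) x
        + u x t * (a - b * u x t)
  eqv : ∀ x, ∀ t : ℝ, 0 < t → ENNReal.ofReal t < T →
    0 = lapl (fun y => v y t) x + u x t - v x t
  vbdd : ∀ t : ℝ, InT t T → ∃ M, ∀ x, |v x t| ≤ M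

/-- Classical solution of (KS) on `ℝ^N × (0,T)` (no regularity required at `t = 0`). -/
structure IsClassicalKSOpen (N : ℕ) (χ a b : ℝ) (T : ℝ≥0∞)
    (u v : Spc N → ℝ → ℝ) : Prop where
  cdu : ∀ t : ℝ, 0 < t → ENNReal.ofReal t < T → ContDiff ℝ 2 fun x => u x t
  cdv : ∀ t : ℝ, 0 < t → ENNReal.ofReal t < T → ContDiff ℝ 2 fun x => v x t
  difft : ∀ x, ∀ t : ℝ, 0 < t → ENNReal.ofReal t < T → DifferentiableAt ℝ (u x) t
  equ : ∀ x, ∀ t : ℝ, 0 < t → ENNReal.ofReal t < T →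
    deriv (u x) t =
      lapl (fun y => u y t) x - χ * divg (fun y => u y t) (fun y => v y t) x
        + u x t * (a - b * u x t)
  eqv : ∀ x, ∀ t : ℝ, 0 < t → ENNReal.ofReal t < T →
    0 = lapl (fun y => v y t) x + u x t - v x t
  vbdd : ∀ t : ℝ, 0 < t → ENNReal.ofReal t < T → ∃ M, ∀ x, |v x t| ≤ M

/-- Nonnegativity of a solution pair on `ℝ^N × [0,T)`. -/
def NonnegOn {N : ℕ} (u v : Spc N → ℝ → ℝ) (T : ℝ≥0∞) : Prop :=
  ∀ x, ∀ t : ℝ, InT t T → 0 ≤ u x t ∧ 0 ≤ v x t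

/-- Nonnegativity of a solution pair on `ℝ^N × (0,T)`. -/
def NonnegOnOpen {N : ℕ} (u v : Spc N → ℝ → ℝ) (T : ℝ≥0∞) : Prop :=
  ∀ x, ∀ t : ℝ, 0 < t → ENNReal.ofReal t < T → 0 ≤ u x t ∧ 0 ≤ v x t

/-- Continuity of `t ↦ u(·,t)` from `[0,T)` into `C_unif^b(ℝ^N)` with the sup-norm. -/
def SupContOn {N : ℕ} (u : Spc N → ℝ → ℝ) (T : ℝ≥0∞) : Prop :=
  (∀ t : ℝ, InT t T → CunifB fun x => u x t) ∧
  ∀ t₀ : ℝ, InT t₀ T → ∀ ε : ℝ, 0 < ε → ∃ δ > 0, ∀ t : ℝ, InT t T → |t - t₀| < δ →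
    ∀ x, |u x t - u x t₀| ≤ ε

/-- `t ↦ u(·,t)` takes values in `L^p`, is continuous from `[0,T)` into `L^p`,
and has value `u₀` at `t = 0` in the `L^p` sense. -/
def LpContOn {N : ℕ} (u : Spc N → ℝ → ℝ) (u₀ : Spc N → ℝ) (p T : ℝ≥0∞) : Prop :=
  (∀ t : ℝ, 0 < t → ENNReal.ofReal t < T → MemLp (fun x => u x t) p volume) ∧
  Tendsto (fun t => eLpNorm (fun x => u x t - u₀ x) p volume)
    (nhdsWithin 0 (Set.Ioi 0)) (nhds 0) ∧
  ∀ t₀ : ℝ, 0 < t₀ → ENNReal.ofReal t₀ < T →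
    Tendsto (fun t => eLpNorm (fun x => u x t - u x t₀) p volume)
      (nhdsWithin t₀ {t | 0 < t ∧ ENNReal.ofReal t < T}) (nhds 0)

/-- The heat kernel `G(x,t) = (4πt)^{-N/2} exp(-|x|²/(4t))`. -/
noncomputable def heatK (N : ℕ) (x : Spc N) (t : ℝ) : ℝ :=
  (4 * π * t) ^ (-(N : ℝ) / 2) * Real.exp (-‖x‖ ^ 2 / (4 * t))

/-- The resolvent `(I - Δ)⁻¹ u`, as the Laplace transform of the heat semigroup. -/
noncomputable def resolv {N : ℕ} (u : Spc N → ℝ) (x : Spc N) : ℝ :=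
  ∫ s in Set.Ioi (0 : ℝ), Real.exp (-s) * ∫ z, heatK N (x - z) s * u z

lemma heatK_nonneg {N : ℕ} (x : Spc N) (s : ℝ) (hs : 0 < s) : 0 ≤ heatK N x s := by
  unfold heatK; positivity

lemma gauss_int {N : ℕ} {s : ℝ} (hs : 0 < s) :
    Integrable (fun z : Spc N => rexp (-‖z‖ ^ 2 / (4 * s))) := by
  have h4 : 0 < 1 / (4 * s) := by positivity
  have := (GaussianFourier.integrable_cexp_neg_mul_sq_norm_add (V := Spc N)
    (b := ((1 / (4*s) : ℝ) : ℂ)) (by simpa using h4) 0 0).norm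
  simp only [mul_zero, zero_mul, add_zero] at this
  convert this using 2 with z
  rw [show (-((((1:ℝ)/(4*s) : ℝ)):ℂ) * (‖z‖:ℂ)^2) = ((-‖z‖^2/(4*s) : ℝ) : ℂ) by push_cast; ring,
    Complex.norm_exp, Complex.ofReal_re]

lemma heatK_integrable {N : ℕ} {s : ℝ} (hs : 0 < s) :
    Integrable (fun z : Spc N => heatK N z s) := by
  unfold heatK
  exact (gauss_int hs).const_mul _

lemma heatK_integral {N : ℕ} {s : ℝ} (hs : 0 < s) :
    ∫ z : Spc N, heatK N z s = 1 := by
  unfold heatK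
  rw [integral_const_mul]
  have h4 : 0 < 1 / (4 * s) := by positivity
  have key := GaussianFourier.integral_rexp_neg_mul_sq_norm (V := Spc N) h4
  rw [finrank_euclideanSpace_fin] at key
  have e : ∀ z : Spc N, -‖z‖^2 / (4*s) = -(1/(4*s)) * ‖z‖^2 := by
    intro z; field_simp
  simp_rw [e]
  rw [key, show π / (1/(4*s)) = 4*π*s by field_simp,
    ← Real.rpow_add (by positivity : (0:ℝ) < 4*π*s)]
  rw [neg_div, neg_add_cancel, Real.rpow_zero]

lemma int_comp_sub {N : ℕ} {f : Spc N → ℝ} (hf : Integrable f) (x : Spc N) :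
    Integrable fun z => f (x - z) := hf.comp_sub_left x

lemma tailset_meas {N : ℕ} (R : ℝ) : MeasurableSet {y : Spc N | R ≤ ‖y‖} :=
  (isClosed_le continuous_const continuous_norm).measurableSet

lemma heatK_contOn {N : ℕ} (x : Spc N) (f : Spc N → ℝ) (hf : Continuous f) :
    ContinuousOn (fun p : ℝ × Spc N => heatK N (x - p.2) p.1 * f p.2)
      (Ioi (0:ℝ) ×ˢ (univ : Set (Spc N))) := by
  intro p hp
  have h1 : (0:ℝ) < p.1 := hp.1
  apply ContinuousAt.continuousWithinAt
  apply ContinuousAt.mul _ (hf.continuousAt.comp continuous_snd.continuousAt)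
  unfold heatK
  apply ContinuousAt.mul
  · exact (Real.continuousAt_rpow_const _ _ (Or.inl (by positivity))).comp
      ((continuous_const.mul continuous_fst).continuousAt)
  · apply Real.continuous_exp.continuousAt.comp
    exact ContinuousAt.div ((continuous_const.sub continuous_snd).norm.pow 2).neg.continuousAt
      (continuous_const.mul continuous_fst).continuousAt (by positivity)

lemma restrict_prod_eq {N : ℕ} :
    ((volume : Measure ℝ).restrict (Ioi 0)).prod (volume : Measure (Spc N)) =
      ((volume : Measure ℝ).prod (volume : Measure (Spc N))).restrict
        (Ioi (0:ℝ) ×ˢ (univ : Set (Spc N))) := by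
  rw [← Measure.restrict_prod_eq_prod_univ]

lemma aesm_inner {N : ℕ} (x : Spc N) (f : Spc N → ℝ) (hf : Continuous f) :
    AEStronglyMeasurable (fun s : ℝ => ∫ z, heatK N (x - z) s * f z)
      ((volume : Measure ℝ).restrict (Ioi 0)) := by
  have h := (heatK_contOn x f hf).aestronglyMeasurable
    (μ := ((volume : Measure ℝ).prod (volume : Measure (Spc N))))
    ((measurableSet_Ioi).prod MeasurableSet.univ)
  rw [← restrict_prod_eq] at h
  exact h.integral_prod_right'

noncomputable def tailT (N : ℕ) (R s : ℝ) : ℝ :=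
  ∫ z : Spc N, Set.indicator {y : Spc N | R ≤ ‖y‖} (fun y => heatK N y s) z

lemma aesm_tail {N : ℕ} (R : ℝ) :
    AEStronglyMeasurable (fun s => tailT N R s)
      ((volume : Measure ℝ).restrict (Ioi 0)) := by
  have h0 : ContinuousOn (fun p : ℝ × Spc N => heatK N p.2 p.1)
      (Ioi (0:ℝ) ×ˢ (univ : Set (Spc N))) := by
    have h := heatK_contOn (0 : Spc N) (fun _ => (1:ℝ)) continuous_const
    have e : (fun p : ℝ × Spc N => heatK N (0 - p.2) p.1 * 1)
        = fun p : ℝ × Spc N => heatK N p.2 p.1 := by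
      funext p; simp [heatK, norm_neg]
    rwa [e] at h
  have h := (h0.aestronglyMeasurable
    (μ := ((volume : Measure ℝ).prod (volume : Measure (Spc N))))
    ((measurableSet_Ioi).prod MeasurableSet.univ)).indicator
    (s := {p : ℝ × Spc N | R ≤ ‖p.2‖})
    (measurable_snd.norm measurableSet_Ici)
  rw [← restrict_prod_eq] at h
  have h2 := h.integral_prod_right'
  exact h2.congr (ae_of_all _ fun s => rfl)

lemma tail_nonneg {N : ℕ} (R s : ℝ) (hs : 0 < s) : 0 ≤ tailT N R s := by
  apply integral_nonneg; intro z
  exact Set.indicator_nonneg (fun y _ => heatK_nonneg y s hs) z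

lemma tail_le_one {N : ℕ} (R s : ℝ) (hs : 0 < s) : tailT N R s ≤ 1 := by
  rw [← heatK_integral (N := N) hs]
  apply integral_mono ((heatK_integrable hs).indicator (tailset_meas R)) (heatK_integrable hs)
  intro z
  by_cases hz : z ∈ {y : Spc N | R ≤ ‖y‖}
  · rw [Set.indicator_of_mem hz]
  · rw [Set.indicator_of_notMem hz]; exact heatK_nonneg z s hs

lemma tail_tendsto {N : ℕ} (s : ℝ) (hs : 0 < s) :
    Tendsto (fun R => tailT N R s) atTop (nhds 0) := by
  have h : Tendsto (fun R => tailT N R s) atTop (nhds (∫ _ : Spc N, (0:ℝ))) := by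
    apply tendsto_integral_filter_of_dominated_convergence (fun z => heatK N z s)
    · exact Eventually.of_forall fun R =>
        ((heatK_integrable hs).indicator (tailset_meas R)).1
    · apply Eventually.of_forall; intro R
      apply ae_of_all; intro z
      rw [Real.norm_eq_abs, abs_of_nonneg (Set.indicator_nonneg
        (fun y _ => heatK_nonneg y s hs) z)]
      by_cases hz : z ∈ {y : Spc N | R ≤ ‖y‖}
      · rw [Set.indicator_of_mem hz]
      · rw [Set.indicator_of_notMem hz]; exact heatK_nonneg z s hs
    · exact heatK_integrable hs
    · apply ae_of_all; intro z
      apply Tendsto.congr' _ (tendsto_const_nhds (x := (0:ℝ)))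
      filter_upwards [eventually_gt_atTop ‖z‖] with R hR
      rw [Set.indicator_of_notMem (by simp only [mem_setOf_eq]; linarith)]
  simpa using h

lemma exp_neg_intOn : IntegrableOn (fun s : ℝ => rexp (-s)) (Ioi 0) := by
  simpa using exp_neg_integrableOn_Ioi 0 one_pos

lemma phi_integrand_integrable {N : ℕ} (R : ℝ) :
    IntegrableOn (fun s => rexp (-s) * tailT N R s) (Ioi (0:ℝ)) := by
  apply Integrable.mono' exp_neg_intOn
  · exact ((Real.continuous_exp.comp continuous_neg).aestronglyMeasurable.restrict).mul
      (aesm_tail R)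
  · rw [ae_restrict_iff' measurableSet_Ioi]
    apply ae_of_all; intro s hs
    rw [Real.norm_eq_abs, abs_mul, abs_of_nonneg (exp_nonneg _),
      abs_of_nonneg (tail_nonneg R s hs)]
    calc rexp (-s) * tailT N R s ≤ rexp (-s) * 1 :=
          mul_le_mul_of_nonneg_left (tail_le_one R s hs) (exp_nonneg _)
      _ = rexp (-s) := mul_one _

noncomputable def Phi (N : ℕ) (R : ℝ) : ℝ := ∫ s in Ioi (0:ℝ), rexp (-s) * tailT N R s

lemma phi_nonneg {N : ℕ} (R : ℝ) : 0 ≤ Phi N R := by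
  apply setIntegral_nonneg measurableSet_Ioi
  intro s hs
  exact mul_nonneg (exp_nonneg _) (tail_nonneg R s hs)

lemma phi_tendsto {N : ℕ} : Tendsto (fun R => Phi N R) atTop (nhds 0) := by
  have h : Tendsto (fun R => Phi N R) atTop (nhds (∫ _ in Ioi (0:ℝ), (0:ℝ))) := by
    apply tendsto_integral_filter_of_dominated_convergence (fun s => rexp (-s))
    · exact Eventually.of_forall fun R =>
        ((Real.continuous_exp.comp continuous_neg).aestronglyMeasurable.restrict).mul
          (aesm_tail R)
    · apply Eventually.of_forall; intro R
      rw [ae_restrict_iff' measurableSet_Ioi]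
      apply ae_of_all; intro s hs
      rw [Real.norm_eq_abs, abs_mul, abs_of_nonneg (exp_nonneg _),
        abs_of_nonneg (tail_nonneg R s hs)]
      calc rexp (-s) * tailT N R s ≤ rexp (-s) * 1 :=
            mul_le_mul_of_nonneg_left (tail_le_one R s hs) (exp_nonneg _)
        _ = rexp (-s) := mul_one _
    · exact exp_neg_intOn
    · rw [ae_restrict_iff' measurableSet_Ioi]
      apply ae_of_all; intro s hs
      simpa using (tail_tendsto s hs).const_mul (rexp (-s))
  simpa using h

lemma abs_int {α : Type*} [MeasurableSpace α] {μ : Measure α} (f : α → ℝ) :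
    |∫ a, f a ∂μ| ≤ ∫ a, |f a| ∂μ := by
  simpa [Real.norm_eq_abs] using norm_integral_le_integral_norm (μ := μ) f

lemma int_mul_bdd {N : ℕ} {s : ℝ} (hs : 0 < s) (x : Spc N) (g : Spc N → ℝ)
    (hg : Continuous g) (C : ℝ) (hC : ∀ z, |g z| ≤ C) :
    Integrable fun z => heatK N (x - z) s * g z := by
  have h := (int_comp_sub (heatK_integrable hs) x).bdd_mul hg.aestronglyMeasurable
    (ae_of_all _ fun z => by simpa using hC z)
  exact h.congr (ae_of_all _ fun z => mul_comm _ _)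

lemma resolv_bound {N : ℕ} (f : Spc N → ℝ) (hf : Continuous f) (L K ε₁ R : ℝ)
    (hK : 0 ≤ K) (hε₁ : 0 ≤ ε₁) (hbd : ∀ z, |f z - L| ≤ K)
    (x : Spc N) (hnear : ∀ z : Spc N, ‖x - z‖ < R → |f z - L| ≤ ε₁) :
    |resolv f x - L| ≤ ε₁ + K * Phi N R := by
  set I : ℝ → ℝ := fun s => ∫ z, heatK N (x - z) s * f z with hIdef
  have hfb : ∀ z, |f z| ≤ K + |L| := by
    intro z
    calc |f z| = |(f z - L) + L| := by ring_nf
      _ ≤ |f z - L| + |L| := abs_add_le _ _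
      _ ≤ K + |L| := add_le_add_left (hbd z) _
  have hIbound : ∀ s : ℝ, 0 < s → |I s - L| ≤ ε₁ + K * tailT N R s := by
    intro s hs
    have hintK : Integrable fun z => heatK N (x - z) s := int_comp_sub (heatK_integrable hs) x
    have hint1 : Integrable fun z => heatK N (x - z) s * f z :=
      int_mul_bdd hs x f hf (K + |L|) hfb
    have hint2 : Integrable fun z => heatK N (x - z) s * (f z - L) :=
      int_mul_bdd hs x (fun z => f z - L) (hf.sub continuous_const) K hbd
    have hconv1 : ∫ z, heatK N (x - z) s = 1 := by
      rw [integral_sub_left_eq_self (fun z => heatK N z s) volume x]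
      exact heatK_integral hs
    have heq : I s - L = ∫ z, heatK N (x - z) s * (f z - L) := by
      have e : (fun z => heatK N (x - z) s * (f z - L))
          = fun z => heatK N (x - z) s * f z - heatK N (x - z) s * L := by
        funext z; ring
      rw [e, integral_sub hint1 (hintK.mul_const L), integral_mul_const, hconv1, one_mul]
    set g : Spc N → ℝ := fun z => ε₁ * heatK N (x - z) s
        + K * Set.indicator {y : Spc N | R ≤ ‖y‖} (fun y => heatK N y s) (x - z) with hgdef
    have hintg : Integrable g :=
      ((hintK.const_mul ε₁).add ((int_comp_sub
        ((heatK_integrable hs).indicator (tailset_meas R)) x).const_mul K))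
    have hptwise : ∀ z, |heatK N (x - z) s * (f z - L)| ≤ g z := by
      intro z
      have hknn := heatK_nonneg (x - z) s hs
      rw [abs_mul, abs_of_nonneg hknn]
      by_cases hz : R ≤ ‖x - z‖
      · have e1 : Set.indicator {y : Spc N | R ≤ ‖y‖} (fun y => heatK N y s) (x - z)
            = heatK N (x - z) s :=
          Set.indicator_of_mem (show (x - z) ∈ {y : Spc N | R ≤ ‖y‖} from hz) _
        have h2 := mul_le_mul_of_nonneg_left (hbd z) hknn
        simp only [hgdef, e1]
        nlinarith [mul_nonneg hε₁ hknn]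
      · push_neg at hz
        have h2 := mul_le_mul_of_nonneg_left (hnear z hz) hknn
        have e1 : Set.indicator {y : Spc N | R ≤ ‖y‖} (fun y => heatK N y s) (x - z) = 0 :=
          Set.indicator_of_notMem (by simpa using not_le.mpr hz) _
        simp only [hgdef, e1, mul_zero, add_zero]
        nlinarith
    have habs : |∫ z, heatK N (x - z) s * (f z - L)| ≤ ∫ z, g z := by
      calc |∫ z, heatK N (x - z) s * (f z - L)|
          ≤ ∫ z, |heatK N (x - z) s * (f z - L)| := abs_int _
        _ ≤ ∫ z, g z := integral_mono hint2.abs hintg hptwise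
    have hgint : ∫ z, g z = ε₁ + K * tailT N R s := by
      rw [hgdef]
      rw [integral_add (hintK.const_mul ε₁) ((int_comp_sub
        ((heatK_integrable hs).indicator (tailset_meas R)) x).const_mul K),
        integral_const_mul, integral_const_mul, hconv1, mul_one]
      congr 1
      congr 1
      rw [integral_sub_left_eq_self
        (fun y => Set.indicator {y : Spc N | R ≤ ‖y‖} (fun y => heatK N y s) y) volume x]
      rfl
    rw [heq]
    rw [hgint] at habs
    exact habs
  -- outer integral
  have hB : ∀ s : ℝ, 0 < s → |I s| ≤ ε₁ + K + |L| := by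
    intro s hs
    have h1 := hIbound s hs
    have h2 := tail_le_one (N := N) R s hs
    have h3 : |I s| ≤ |I s - L| + |L| := by
      calc |I s| = |(I s - L) + L| := by ring_nf
        _ ≤ |I s - L| + |L| := abs_add_le _ _
    nlinarith [tail_nonneg (N := N) R s hs]
  have haesm : AEStronglyMeasurable (fun s => rexp (-s) * I s)
      ((volume : Measure ℝ).restrict (Ioi 0)) :=
    ((Real.continuous_exp.comp continuous_neg).aestronglyMeasurable.restrict).mul
      (aesm_inner x f hf)
  have hBint : IntegrableOn (fun s => rexp (-s) * I s) (Ioi (0:ℝ)) := by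
    apply Integrable.mono' (exp_neg_intOn.mul_const (ε₁ + K + |L|)) haesm
    rw [ae_restrict_iff' measurableSet_Ioi]
    apply ae_of_all; intro s hs
    rw [Real.norm_eq_abs, abs_mul, abs_of_nonneg (exp_nonneg _)]
    exact mul_le_mul_of_nonneg_left (hB s hs) (exp_nonneg _)
  have hexp1 : ∫ s in Ioi (0:ℝ), rexp (-s) = 1 := by
    simpa using integral_exp_neg_Ioi (0:ℝ)
  have hexpL : ∫ s in Ioi (0:ℝ), rexp (-s) * L = L := by
    rw [integral_mul_const, hexp1, one_mul]
  have key : resolv f x - L = ∫ s in Ioi (0:ℝ), rexp (-s) * (I s - L) := by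
    have e : (fun s => rexp (-s) * (I s - L))
        = fun s => rexp (-s) * I s - rexp (-s) * L := by funext s; ring
    rw [e, integral_sub hBint (exp_neg_intOn.mul_const L), hexpL]
    rfl
  have hrhs_int : IntegrableOn
      (fun s => rexp (-s) * ε₁ + K * (rexp (-s) * tailT N R s)) (Ioi (0:ℝ)) :=
    (exp_neg_intOn.mul_const ε₁).add ((phi_integrand_integrable R).const_mul K)
  calc |resolv f x - L| = |∫ s in Ioi (0:ℝ), rexp (-s) * (I s - L)| := by rw [key]
    _ ≤ ∫ s in Ioi (0:ℝ), |rexp (-s) * (I s - L)| := abs_int _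
    _ ≤ ∫ s in Ioi (0:ℝ), (rexp (-s) * ε₁ + K * (rexp (-s) * tailT N R s)) := by
        apply setIntegral_mono_on ((hBint.sub (exp_neg_intOn.mul_const L)).abs.congr
          (ae_of_all _ fun s => by simp only [Pi.sub_apply]; congr 1; ring))
          hrhs_int measurableSet_Ioi
        intro s hs
        rw [abs_mul, abs_of_nonneg (exp_nonneg _)]
        have := mul_le_mul_of_nonneg_left (hIbound s hs) (exp_nonneg (-s))
        nlinarith
    _ = ε₁ + K * Phi N R := by
        rw [integral_add (exp_neg_intOn.mul_const ε₁)
          ((phi_integrand_integrable R).const_mul K),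
          integral_mul_const, hexp1, one_mul, integral_const_mul]
        rfl

/-- Lemma 5.5 (i): if `u` is continuous, nonnegative and bounded on
`ℝ^N × [0,∞)` and `u(x,t) → a/b` uniformly on `{|x| ≤ ct}` for every `0 ≤ c < c*`, then
the resolvent `v(·,t) = (I-Δ)⁻¹ u(·,t)` satisfies the same convergence. -/
theorem resolvent_inherits_inner_spreading
    (N : ℕ) (hN : 1 ≤ N) (a b cstar : ℝ) (ha : 0 < a) (hb : 0 < b) (hc : 0 < cstar)
    (u : Spc N → ℝ → ℝ)
    (hcont : ContinuousOn (fun q : Spc N × ℝ => u q.1 q.2) {q | 0 ≤ q.2})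
    (hnn : ∀ x, ∀ t : ℝ, 0 ≤ t → 0 ≤ u x t)
    (hbdd : ∃ M, ∀ x, ∀ t : ℝ, 0 ≤ t → u x t ≤ M)
    (hyp : ∀ c : ℝ, 0 ≤ c → c < cstar → ∀ ε : ℝ, 0 < ε →
      ∃ T : ℝ, ∀ t : ℝ, T ≤ t → ∀ x : Spc N, ‖x‖ ≤ c * t → |u x t - a / b| < ε) :
    ∀ c : ℝ, 0 ≤ c → c < cstar → ∀ ε : ℝ, 0 < ε →
      ∃ T : ℝ, ∀ t : ℝ, T ≤ t → ∀ x : Spc N, ‖x‖ ≤ c * t →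
        |resolv (fun y => u y t) x - a / b| < ε := by
  intro c hc0 hcstar ε hε
  obtain ⟨M, hM⟩ := hbdd
  set L := a / b with hLdef
  have hL0 : 0 ≤ L := le_of_lt (div_pos ha hb)
  set K := max M 0 + L with hKdef
  have hK0 : 0 ≤ K := add_nonneg (le_max_right M 0) hL0
  have hub : ∀ x, ∀ t : ℝ, 0 ≤ t → |u x t - L| ≤ K := by
    intro x t ht
    have h1 := hnn x t ht
    have h2 := hM x t ht
    rw [abs_le]
    constructor
    · have h3 := le_max_right M 0
      linarith
    · have h3 := le_max_left M 0
      linarith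
  have hut : ∀ t : ℝ, 0 ≤ t → Continuous fun x : Spc N => u x t := by
    intro t ht
    exact hcont.comp_continuous (continuous_id.prodMk continuous_const)
      (fun x => by simpa using ht)
  set c'' := (c + cstar) / 2 with hc''def
  set δ := (cstar - c) / 2 with hδdef
  have hδ : 0 < δ := by rw [hδdef]; linarith
  have hc''0 : 0 ≤ c'' := by rw [hc''def]; linarith
  have hc''lt : c'' < cstar := by rw [hc''def]; linarith
  have hε₁ : 0 < ε / 3 := by linarith
  obtain ⟨T₁, hT₁⟩ := hyp c'' hc''0 hc''lt (ε / 3) hε₁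
  have hphi := (phi_tendsto (N := N)).const_mul K
  rw [mul_zero] at hphi
  have hev : ∀ᶠ R in atTop, K * Phi N R < ε / 3 :=
    hphi.eventually_lt_const hε₁
  obtain ⟨R₀, hR₀⟩ := eventually_atTop.mp hev
  refine ⟨max T₁ (max (R₀ / δ) 1), ?_⟩
  intro t ht x hx
  have ht1 : (1:ℝ) ≤ t := le_trans (le_trans (le_max_right _ _) (le_max_right T₁ _)) ht
  have ht0 : 0 ≤ t := by linarith
  have htT₁ : T₁ ≤ t := le_trans (le_max_left _ _) ht
  have hδt : R₀ ≤ δ * t := by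
    have h4 : R₀ / δ ≤ t := le_trans (le_trans (le_max_left _ _) (le_max_right T₁ _)) ht
    calc R₀ = (R₀ / δ) * δ := by field_simp
      _ ≤ t * δ := mul_le_mul_of_nonneg_right h4 hδ.le
      _ = δ * t := mul_comm _ _
  have hnear : ∀ z : Spc N, ‖x - z‖ < δ * t → |u z t - L| ≤ ε / 3 := by
    intro z hz
    have hzn : ‖z‖ ≤ c'' * t := by
      have h5 : ‖z‖ ≤ ‖x‖ + ‖x - z‖ := by
        calc ‖z‖ = ‖x - (x - z)‖ := by congr 1; abel
          _ ≤ ‖x‖ + ‖x - z‖ := norm_sub_le _ _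
      have : c * t + δ * t = c'' * t := by rw [hc''def, hδdef]; ring
      linarith
    exact le_of_lt (hT₁ t htT₁ z hzn)
  have hmain := resolv_bound (fun z => u z t) (hut t ht0) L K (ε / 3) (δ * t)
    hK0 hε₁.le (fun z => hub z t ht0) x hnear
  have hphi2 := hR₀ (δ * t) hδt
  calc |resolv (fun y => u y t) x - a / b| = |resolv (fun y => u y t) x - L| := by rw [hLdef]
    _ ≤ ε / 3 + K * Phi N (δ * t) := hmain
    _ < ε / 3 + ε / 3 := by linarith
    _ < ε := by linarith
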